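/- Let p be a prime and m > 0 an integer, and let Φ be an edge-monotone graph property that is nontrivial on p^m. Let c and d be positive integers with c·d ≤ |F_{p^m}^+|, and suppose there exists A ⊆ F_{p^m}^+ with |A| ≥ |F_{p^m}^+| − d and Φ(C^A) = 1. Then there exists B ⊆ F_{p^m}^+ with |B| ≥ c and χ̂(Φ, C^B) ≢ 0 (mod p). -/

import Mathlib

open scoped Classical

/-!
Statement 12: Let `Φ` be an edge-monotone graph property that is nontrivial on `p^m`,
let `c, d > 0` with `c·d ≤ |F_{p^m}^+|`, and suppose there is `A ⊆ F_{p^m}^+` with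
`|A| ≥ |F_{p^m}^+| − d` and `Φ(C^A) = 1`. Then there is `B ⊆ F_{p^m}^+` with `|B| ≥ c`
and `χ̂(Φ, C^B) ≢ 0 (mod p)`.
-/

/-- `P` is a valid choice of `F^+`: a set of nonzero elements containing exactly one of
`x` and `−x` for every nonzero `x`. -/
def IsPlusSet {F : Type*} [Field F] (P : Set F) : Prop :=
  0 ∉ P ∧ ∀ x : F, x ≠ 0 → ((x ∈ P ∨ -x ∈ P) ∧ (x ∈ P → -x ∈ P → x = -x))

/-- The alternating enumerator `χ̂(Φ,H) = Σ_{S ⊆ E(H)} Φ(H[S])·(−1)^{|S|}`. -/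
noncomputable def altEnum {V : Type*} [Fintype V] [DecidableEq V]
    (Φ : SimpleGraph V → Prop) (H : SimpleGraph V) : ℤ :=
  ∑ S ∈ H.edgeFinset.powerset,
    if Φ (SimpleGraph.fromEdgeSet (S : Set (Sym2 V))) then (-1 : ℤ) ^ S.card else 0

open Finset SimpleGraph

set_option linter.unusedSectionVars false
set_option linter.unusedVariables false
set_option maxHeartbeats 1600000

section Aux

variable {F : Type*} [Field F] [Fintype F] [DecidableEq F]

/-- translation on Sym2 -/
private def tr (a : F) (e : Sym2 F) : Sym2 F := Sym2.map (· + a) e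

private lemma tr_mk (a u v : F) : tr a s(u, v) = s(u + a, v + a) := Sym2.map_pair_eq _ _ _

private lemma tr_inj (a : F) : Function.Injective (tr (F := F) a) :=
  Sym2.map.injective (add_left_injective a)

private lemma tr_tr (a b : F) (e : Sym2 F) : tr b (tr a e) = tr (a + b) e := by
  unfold tr; rw [Sym2.map_map]; apply Sym2.map_congr; intro x _; simp [Function.comp, add_assoc]

private lemma tr_zero (e : Sym2 F) : tr 0 e = e := by
  unfold tr
  have : (· + (0:F)) = id := by funext x; simp
  rw [this, Sym2.map_id, id]

private lemma mem_edgeSet_circ {s : Set F} {u v : F} :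
    s(u, v) ∈ (circulantGraph s).edgeSet ↔ u ≠ v ∧ (u - v ∈ s ∨ v - u ∈ s) := by
  rw [SimpleGraph.mem_edgeSet, circulantGraph_adj]

private lemma circ_mono {s t : Set F} (h : s ⊆ t) : circulantGraph s ≤ circulantGraph t := by
  intro u v huv
  rw [circulantGraph_adj] at huv ⊢
  exact ⟨huv.1, huv.2.imp (fun h' => h h') (fun h' => h h')⟩

private lemma circ_le_symm {s t : Set F} (h : s ⊆ t ∪ (-t)) :
    circulantGraph s ≤ circulantGraph t := by
  intro u v huv
  rw [circulantGraph_adj] at huv ⊢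
  refine ⟨huv.1, ?_⟩
  rcases huv.2 with h' | h'
  · rcases h h' with h'' | h''
    · exact Or.inl h''
    · exact Or.inr (by simpa using h'')
  · rcases h h' with h'' | h''
    · exact Or.inr h''
    · exact Or.inl (by simpa using h'')

private lemma char_of_card (p m : ℕ) (hp : p.Prime) (hm : 0 < m) (hF : Fintype.card F = p ^ m) :
    CharP F p := by
  have hqprime : (ringChar F).Prime := CharP.char_is_prime F (ringChar F)
  obtain ⟨n, hn, hcard⟩ := FiniteField.card F (ringChar F)
  have : p ∣ ringChar F ^ (n : ℕ) := by
    rw [← hcard, hF]; exact dvd_pow_self p hm.ne'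
  have hpq : p = ringChar F :=
    (Nat.prime_dvd_prime_iff_eq hp hqprime).mp (hp.dvd_of_dvd_pow this)
  rw [hpq]; exact ringChar.charP F

private lemma circ_iso_scale {B : Set F} {lam : F} (hl : lam ≠ 0) :
    Nonempty (circulantGraph B ≃g circulantGraph ((lam * ·) '' B)) := by
  have hinj : Function.Injective (lam * ·) := fun x y h => mul_left_cancel₀ hl h
  refine ⟨⟨Equiv.mulLeft₀ lam hl, ?_⟩⟩
  intro u v
  simp only [Equiv.coe_fn_mk, Equiv.mulLeft₀_apply, circulantGraph_adj]
  constructor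
  · rintro ⟨hne, h⟩
    refine ⟨fun h' => hne (by rw [h']), ?_⟩
    rcases h with h | h
    · left; rw [← mul_sub] at h; exact hinj.mem_set_image.mp h
    · right; rw [← mul_sub] at h; exact hinj.mem_set_image.mp h
  · rintro ⟨hne, h⟩
    refine ⟨fun h' => hne (hinj h'), ?_⟩
    rcases h with h | h
    · left; rw [← mul_sub]; exact Set.mem_image_of_mem _ h
    · right; rw [← mul_sub]; exact Set.mem_image_of_mem _ h

/-- For `p` odd, `2 * |P| = card F - 1`. -/
private lemma plusSet_card_odd (P : Set F) (hP : IsPlusSet P) (h2 : (2 : F) ≠ 0) :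
    2 * P.toFinset.card = Fintype.card F - 1 := by
  have key : P.toFinset ∪ P.toFinset.image (fun x => -x) = Finset.univ.erase 0 := by
    ext x
    simp only [Finset.mem_union, Finset.mem_image, Set.mem_toFinset, Finset.mem_erase,
      Finset.mem_univ, and_true]
    constructor
    · rintro (hx | ⟨y, hy, rfl⟩)
      · exact fun h => hP.1 (h ▸ hx)
      · intro h
        rw [neg_eq_zero] at h
        exact hP.1 (h ▸ hy)
    · intro hx
      rcases (hP.2 x hx).1 with h | h
      · exact Or.inl h
      · exact Or.inr ⟨-x, h, by ring⟩
  have hdisj : Disjoint P.toFinset (P.toFinset.image (fun x => -x)) := by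
    rw [Finset.disjoint_left]
    intro x hx hximg
    obtain ⟨y, hy, rfl⟩ := Finset.mem_image.mp hximg
    rw [Set.mem_toFinset] at hx hy
    have hxne : (-y : F) ≠ 0 := fun h => hP.1 ((neg_eq_zero.mp h) ▸ hy)
    have := (hP.2 (-y) hxne).2 hx (by simpa using hy)
    rw [neg_neg] at this
    have : (2 : F) * y = 0 := by linear_combination -this
    rcases mul_eq_zero.mp this with h | h
    · exact h2 h
    · exact hxne (by rw [h, neg_zero])
  have hcard := Finset.card_union_of_disjoint hdisj
  rw [key, Finset.card_erase_of_mem (Finset.mem_univ 0), Finset.card_univ,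
    Finset.card_image_of_injective _ neg_injective] at hcard
  omega

/-- For `p = 2` (char 2), `|P| = card F - 1`. -/
private lemma plusSet_card_two (P : Set F) (hP : IsPlusSet P) (h2 : (2 : F) = 0) :
    P.toFinset.card = Fintype.card F - 1 := by
  have hneg : ∀ x : F, -x = x := fun x => by linear_combination -x * h2
  have key : P.toFinset = Finset.univ.erase 0 := by
    ext x
    simp only [Set.mem_toFinset, Finset.mem_erase, Finset.mem_univ, and_true]
    constructor
    · exact fun hx h => hP.1 (h ▸ hx)
    · intro hx
      rcases (hP.2 x hx).1 with h | h
      · exact h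
      · rwa [hneg] at h
  rw [key, Finset.card_erase_of_mem (Finset.mem_univ 0), Finset.card_univ]

/-- Every small subset of `P` satisfies `Φ`. -/
private lemma small_phi
    (p m : ℕ) (hp : p.Prime) (hm : 0 < m) (hF : Fintype.card F = p ^ m)
    (P : Set F) (hP : IsPlusSet P)
    (Φ : SimpleGraph F → Prop)
    (hΦiso : ∀ G₁ G₂ : SimpleGraph F, Nonempty (G₁ ≃g G₂) → (Φ G₁ ↔ Φ G₂))
    (hΦmono : ∀ G₁ G₂ : SimpleGraph F, G₂ ≤ G₁ → Φ G₁ → Φ G₂)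
    (c d : ℕ) (hd : 0 < d) (hcd : c * d ≤ P.ncard)
    (A : Set F) (hA : A ⊆ P) (hAcard : P.ncard - d ≤ A.ncard)
    (hΦA : Φ (SimpleGraph.circulantGraph A))
    (B : Set F) (hB : B ⊆ P) (hBc : B.ncard < c) :
    Φ (SimpleGraph.circulantGraph B) := by
  -- Finset versions
  set Pf := P.toFinset with hPf
  set Af := A.toFinset with hAf
  set Bf := B.toFinset with hBf
  have hPn : P.ncard = Pf.card := Set.ncard_eq_toFinset_card' P
  have hAn : A.ncard = Af.card := Set.ncard_eq_toFinset_card' A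
  have hBn : B.ncard = Bf.card := Set.ncard_eq_toFinset_card' B
  have hAP : Af ⊆ Pf := by
    intro x hx; rw [Set.mem_toFinset] at *; exact hA hx
  set Df := Pf \ Af with hDf
  have hDfd : Df.card ≤ d := by
    have h1 : Df.card = Pf.card - Af.card := Finset.card_sdiff_of_subset hAP
    have h2 : Pf.card - d ≤ Af.card := by rw [← hPn, ← hAn]; exact hAcard
    omega
  set W := Df ∪ Df.image (fun x => -x) with hW
  set Bad := Bf.biUnion (fun b => W.image (· * b⁻¹)) with hBad
  have hBadcard : Bad.card ≤ Bf.card * W.card := by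
    calc Bad.card ≤ ∑ b ∈ Bf, (W.image (· * b⁻¹)).card := Finset.card_biUnion_le
    _ ≤ ∑ _b ∈ Bf, W.card := Finset.sum_le_sum (fun b _ => Finset.card_image_le)
    _ = Bf.card * W.card := by rw [Finset.sum_const, smul_eq_mul]
  have hc0 : 0 < c := lt_of_le_of_lt (Nat.zero_le _) hBc
  -- strict bound
  have hstrict : Bad.card < Fintype.card F - 1 := by
    rcases eq_or_ne ((2 : F)) 0 with h2 | h2
    · -- char 2
      have hWD : W = Df := by
        have hneg : ∀ x : F, -x = x := fun x => by linear_combination -x * h2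
        rw [hW]
        have : Df.image (fun x => -x) = Df := by
          apply Finset.image_congr (g := id) (fun x _ => hneg x) |>.trans Finset.image_id
        rw [this, Finset.union_idempotent]
      have hPcard : Pf.card = Fintype.card F - 1 := plusSet_card_two P hP h2
      have : Bad.card ≤ (c - 1) * d := by
        calc Bad.card ≤ Bf.card * W.card := hBadcard
        _ ≤ (c - 1) * d := Nat.mul_le_mul (by omega) (by rw [hWD] at *; exact hDfd)
      calc Bad.card ≤ (c-1) * d := this
      _ < c * d := by
        apply Nat.mul_lt_mul_of_lt_of_le (by omega) le_rfl hd
      _ ≤ Pf.card := by rw [← hPn]; exact hcd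
      _ = Fintype.card F - 1 := hPcard
    · -- odd char
      have hPcard : 2 * Pf.card = Fintype.card F - 1 := plusSet_card_odd P hP h2
      have hWcard : W.card ≤ 2 * d := by
        calc W.card ≤ Df.card + (Df.image (fun x => -x)).card := Finset.card_union_le _ _
        _ ≤ Df.card + Df.card := by
            exact Nat.add_le_add le_rfl Finset.card_image_le
        _ ≤ 2 * d := by omega
      calc Bad.card ≤ Bf.card * W.card := hBadcard
      _ ≤ (c - 1) * (2 * d) := Nat.mul_le_mul (by omega) hWcard
      _ < c * (2 * d) := by
        apply Nat.mul_lt_mul_of_lt_of_le (by omega) le_rfl (by omega)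
      _ = 2 * (c * d) := by ring
      _ ≤ 2 * Pf.card := by rw [← hPn]; omega
      _ = Fintype.card F - 1 := hPcard
  -- choose lambda
  have hex : ∃ lam ∈ Finset.univ.erase (0 : F), lam ∉ Bad := by
    by_contra hcon
    push_neg at hcon
    have hsub : Finset.univ.erase (0 : F) ⊆ Bad := fun x hx => hcon x hx
    have := Finset.card_le_card hsub
    rw [Finset.card_erase_of_mem (Finset.mem_univ 0), Finset.card_univ] at this
    omega
  obtain ⟨lam, hlam0, hlamBad⟩ := hex
  have hlamne : lam ≠ 0 := (Finset.mem_erase.mp hlam0).1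
  -- lam * B ⊆ A ∪ -A
  have himg : (lam * ·) '' B ⊆ A ∪ (-A) := by
    rintro y ⟨b, hbB, rfl⟩
    have hbP : b ∈ P := hB hbB
    have hbne : b ≠ 0 := fun h => hP.1 (h ▸ hbP)
    have hlbW : lam * b ∉ W := by
      intro hmem
      apply hlamBad
      rw [hBad, Finset.mem_biUnion]
      refine ⟨b, by rw [hBf, Set.mem_toFinset]; exact hbB, ?_⟩
      rw [Finset.mem_image]
      exact ⟨lam * b, hmem, by field_simp⟩
    have hlbne : lam * b ≠ 0 := mul_ne_zero hlamne hbne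
    rcases (hP.2 (lam * b) hlbne).1 with hin | hin
    · left
      by_contra hnA
      apply hlbW
      rw [hW, Finset.mem_union]
      left
      rw [hDf, Finset.mem_sdiff, Set.mem_toFinset, Set.mem_toFinset]
      exact ⟨hin, hnA⟩
    · right
      rw [Set.mem_neg]
      by_contra hnA
      apply hlbW
      rw [hW, Finset.mem_union]
      right
      rw [Finset.mem_image]
      refine ⟨-(lam * b), ?_, by ring⟩
      rw [hDf, Finset.mem_sdiff, Set.mem_toFinset, Set.mem_toFinset]
      exact ⟨hin, hnA⟩
  -- conclude
  have hle : SimpleGraph.circulantGraph ((lam * ·) '' B) ≤ SimpleGraph.circulantGraph A :=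
    circ_le_symm himg
  have hΦimg : Φ (SimpleGraph.circulantGraph ((lam * ·) '' B)) := hΦmono _ _ hle hΦA
  exact (hΦiso _ _ (circ_iso_scale hlamne)).mpr hΦimg

private lemma image_tr_tr (a b : F) (S : Finset (Sym2 F)) :
    (S.image (tr a)).image (tr b) = S.image (tr (a + b)) := by
  rw [Finset.image_image]
  exact Finset.image_congr (fun e _ => tr_tr a b e)

private lemma image_tr_zero (S : Finset (Sym2 F)) : S.image (tr 0) = S := by
  have : S.image (tr 0) = S.image id := Finset.image_congr (fun e _ => tr_zero e)
  rw [this, Finset.image_id]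

private lemma mem_image_tr {a : F} {S : Finset (Sym2 F)} {e : Sym2 F} :
    tr a e ∈ S.image (tr a) ↔ e ∈ S := by
  constructor
  · intro h
    obtain ⟨e', he', heq⟩ := Finset.mem_image.mp h
    rwa [← tr_inj a heq]
  · exact fun h => Finset.mem_image_of_mem _ h

/-- The edge set of a circulant graph is translation invariant. -/
private lemma circ_edge_tr (s : Finset F) (a : F) :
    ((circulantGraph (↑s : Set F)).edgeFinset).image (tr a)
      = (circulantGraph (↑s : Set F)).edgeFinset := by
  apply Finset.eq_of_subset_of_card_le
  · intro e he
    obtain ⟨e', he', rfl⟩ := Finset.mem_image.mp he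
    induction e' with
    | _ u v =>
      rw [SimpleGraph.mem_edgeFinset, SimpleGraph.mem_edgeSet] at he'
      rw [tr_mk, SimpleGraph.mem_edgeFinset, SimpleGraph.mem_edgeSet]
      exact (circulantGraph_adj_translate (d := a)).mpr he'
  · rw [Finset.card_image_of_injective _ (tr_inj a)]

private lemma fromEdgeSet_tr_iso (a : F) (S : Finset (Sym2 F)) :
    Nonempty ((SimpleGraph.fromEdgeSet (S : Set (Sym2 F))) ≃g
      (SimpleGraph.fromEdgeSet ((S.image (tr a) : Finset (Sym2 F)) : Set (Sym2 F)))) := by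
  refine ⟨⟨Equiv.addRight a, ?_⟩⟩
  intro u v
  simp only [Equiv.coe_addRight, SimpleGraph.fromEdgeSet_adj, Finset.coe_image,
    Set.mem_image, Finset.mem_coe]
  constructor
  · rintro ⟨⟨e, he, heq⟩, hne⟩
    have : tr a e = tr a s(u,v) := by rw [tr_mk]; exact heq
    refine ⟨?_, fun h => hne (by rw [h])⟩
    rwa [← tr_inj a this]
  · rintro ⟨hmem, hne⟩
    exact ⟨⟨s(u,v), hmem, (tr_mk a u v)⟩, fun h => hne (by simpa using h)⟩

private def Orb (S : Finset (Sym2 F)) : Finset (Finset (Sym2 F)) :=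
  Finset.univ.image (fun a : F => S.image (tr a))

private lemma mem_orb_iff {S T : Finset (Sym2 F)} : T ∈ Orb S ↔ ∃ a : F, S.image (tr a) = T := by
  unfold Orb
  simp [Finset.mem_image]

private lemma mem_orb_self (S : Finset (Sym2 F)) : S ∈ Orb S :=
  mem_orb_iff.mpr ⟨0, image_tr_zero S⟩

private lemma orb_eq_of_mem {S T : Finset (Sym2 F)} (h : T ∈ Orb S) : Orb T = Orb S := by
  obtain ⟨a, rfl⟩ := mem_orb_iff.mp h
  ext U
  rw [mem_orb_iff, mem_orb_iff]
  constructor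
  · rintro ⟨b, rfl⟩
    exact ⟨a + b, (image_tr_tr a b S).symm⟩
  · rintro ⟨b, rfl⟩
    refine ⟨-a + b, ?_⟩
    rw [image_tr_tr, ← add_assoc, add_neg_cancel, zero_add]

/-- Orbit–stabilizer: the orbit size divides the group order. -/
private lemma orb_card_mul (S : Finset (Sym2 F)) :
    (Orb S).card * (Finset.univ.filter (fun a : F => S.image (tr a) = S)).card
      = Fintype.card F := by
  classical
  set f : F → Finset (Sym2 F) := fun a => S.image (tr a) with hf
  set St := Finset.univ.filter (fun a : F => S.image (tr a) = S) with hSt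
  have hfib : ∀ y ∈ Finset.univ.image f,
      (Finset.univ.filter (fun a : F => f a = y)).card = St.card := by
    intro y hy
    obtain ⟨a₀, _, rfl⟩ := Finset.mem_image.mp hy
    have hkey : Finset.univ.filter (fun a : F => f a = f a₀) = St.image (· + a₀) := by
      ext a
      simp only [Finset.mem_filter, Finset.mem_univ, true_and, Finset.mem_image, hSt, hf]
      constructor
      · intro h
        refine ⟨a - a₀, ⟨?_, by ring⟩⟩
        have := congrArg (fun T => T.image (tr (-a₀))) h
        rw [image_tr_tr, image_tr_tr] at this
        calc S.image (tr (a - a₀)) = S.image (tr (a + -a₀)) := by ring_nf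
        _ = S := by rw [this]; rw [add_neg_cancel, image_tr_zero]
      · rintro ⟨b, hb, rfl⟩
        rw [← image_tr_tr, hb]
    rw [hkey, Finset.card_image_of_injective _ (add_left_injective a₀)]
  have := Finset.card_eq_sum_card_image f (Finset.univ : Finset F)
  rw [Finset.card_univ] at this
  rw [this, Finset.sum_congr rfl hfib, Finset.sum_const, smul_eq_mul]
  rfl

private lemma orb_card_dvd (S : Finset (Sym2 F)) : (Orb S).card ∣ Fintype.card F :=
  ⟨_, (orb_card_mul S).symm⟩

private lemma p_dvd_orb_card (p m : ℕ) (hp : p.Prime) (hF : Fintype.card F = p ^ m)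
    (S : Finset (Sym2 F)) (hmoved : ¬ ∀ a : F, S.image (tr a) = S) :
    p ∣ (Orb S).card := by
  have hdvd : (Orb S).card ∣ p ^ m := hF ▸ orb_card_dvd S
  obtain ⟨k, hk, hcard⟩ := (Nat.dvd_prime_pow hp).mp hdvd
  rcases Nat.eq_zero_or_pos k with hk0 | hkpos
  · exfalso
    rw [hk0, pow_zero] at hcard
    obtain ⟨T, hT⟩ := Finset.card_eq_one.mp hcard
    apply hmoved
    intro a
    have h1 : S = T := by
      have := mem_orb_self S
      rw [hT, Finset.mem_singleton] at this
      exact this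
    have h2 : S.image (tr a) ∈ Orb S := mem_orb_iff.mpr ⟨a, rfl⟩
    rw [hT, Finset.mem_singleton] at h2
    rw [h2, ← h1]
  · rw [hcard]
    exact dvd_pow_self p hkpos.ne'

private lemma f_invariant (p : ℕ)
    (Φ : SimpleGraph F → Prop)
    (hΦiso : ∀ G₁ G₂ : SimpleGraph F, Nonempty (G₁ ≃g G₂) → (Φ G₁ ↔ Φ G₂))
    (S : Finset (Sym2 F)) (a : F) :
    (if Φ (SimpleGraph.fromEdgeSet ((S.image (tr a) : Finset (Sym2 F)) : Set (Sym2 F)))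
      then (-1 : ZMod p) ^ (S.image (tr a)).card else 0)
    = (if Φ (SimpleGraph.fromEdgeSet (S : Set (Sym2 F))) then (-1 : ZMod p) ^ S.card else 0) := by
  rw [Finset.card_image_of_injective _ (tr_inj a)]
  congr 1
  exact propext ((hΦiso _ _ (fromEdgeSet_tr_iso a S)).symm)

private lemma moved_sum_zero (p m : ℕ) (hp : p.Prime) (hF : Fintype.card F = p ^ m)
    (Φ : SimpleGraph F → Prop)
    (hΦiso : ∀ G₁ G₂ : SimpleGraph F, Nonempty (G₁ ≃g G₂) → (Φ G₁ ↔ Φ G₂))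
    (E : Finset (Sym2 F)) (hE : ∀ a : F, E.image (tr a) = E) :
    ∑ S ∈ E.powerset.filter (fun S => ¬ ∀ a : F, S.image (tr a) = S),
      (if Φ (SimpleGraph.fromEdgeSet (S : Set (Sym2 F))) then (-1 : ZMod p) ^ S.card else 0)
      = 0 := by
  classical
  set f : Finset (Sym2 F) → ZMod p := fun S =>
    if Φ (SimpleGraph.fromEdgeSet (S : Set (Sym2 F))) then (-1 : ZMod p) ^ S.card else 0 with hfdef
  set M := E.powerset.filter (fun S => ¬ ∀ a : F, S.image (tr a) = S) with hM
  have hMclosed : ∀ S ∈ M, ∀ a : F, S.image (tr a) ∈ M := by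
    intro S hS a
    rw [hM, Finset.mem_filter, Finset.mem_powerset] at hS ⊢
    obtain ⟨hsub, hmoved⟩ := hS
    constructor
    · calc S.image (tr a) ⊆ E.image (tr a) := Finset.image_subset_image hsub
      _ = E := hE a
    · intro hfix
      apply hmoved
      intro b
      have hS_eq : S = S.image (tr a) := by
        conv_lhs => rw [← image_tr_zero S, ← add_neg_cancel a, ← image_tr_tr, hfix (-a)]
      rw [hS_eq, hfix b, ← hS_eq]
  have hmaps : ∀ S ∈ M, Orb S ∈ M.image Orb := fun S hS => Finset.mem_image_of_mem _ hS
  rw [← Finset.sum_fiberwise_of_maps_to hmaps f]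
  apply Finset.sum_eq_zero
  intro O hO
  obtain ⟨S₀, hS₀M, rfl⟩ := Finset.mem_image.mp hO
  have hfilter : M.filter (fun S => Orb S = Orb S₀) = Orb S₀ := by
    ext T
    rw [Finset.mem_filter]
    constructor
    · rintro ⟨hTM, hOrb⟩
      rw [← hOrb]; exact mem_orb_self T
    · intro hT
      obtain ⟨a, rfl⟩ := mem_orb_iff.mp hT
      exact ⟨hMclosed S₀ hS₀M a, orb_eq_of_mem hT⟩
  rw [hfilter]
  have hconst : ∀ T ∈ Orb S₀, f T = f S₀ := by
    intro T hT
    obtain ⟨a, rfl⟩ := mem_orb_iff.mp hT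
    exact f_invariant p Φ hΦiso S₀ a
  rw [Finset.sum_congr rfl hconst, Finset.sum_const]
  have hmoved : ¬ ∀ a : F, S₀.image (tr a) = S₀ := (Finset.mem_filter.mp hS₀M).2
  have hdvd : p ∣ (Orb S₀).card := p_dvd_orb_card p m hp hF S₀ hmoved
  have : ((Orb S₀).card : ZMod p) = 0 := (ZMod.natCast_eq_zero_iff _ _).mpr hdvd
  rw [nsmul_eq_mul, this, zero_mul]

private lemma edge_zero_mem {P : Set F} (hP : IsPlusSet P) {B' : Finset F} (hB' : ↑B' ⊆ P)
    {b : F} (hbP : b ∈ P) :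
    s(0, b) ∈ (circulantGraph (↑B' : Set F)).edgeFinset ↔ b ∈ B' := by
  have hb0 : b ≠ 0 := fun h => hP.1 (h ▸ hbP)
  rw [SimpleGraph.mem_edgeFinset, SimpleGraph.mem_edgeSet, circulantGraph_adj]
  constructor
  · rintro ⟨-, h | h⟩
    · have h' : -b ∈ B' := by
        have : (0 : F) - b = -b := by ring
        rwa [this] at h
      have hnb : -b ∈ P := hB' h'
      have heq := (hP.2 b hb0).2 hbP hnb
      rwa [heq]
    · have : b - 0 = b := by ring
      rwa [this] at h
  · intro h
    refine ⟨fun h' => hb0 h'.symm, Or.inr ?_⟩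
    have : b - 0 = b := by ring
    rw [this]
    exact h

private lemma fixed_eq {P : Set F} (hP : IsPlusSet P) (Bf : Finset F) (hB : ↑Bf ⊆ P)
    (S : Finset (Sym2 F)) (hsub : S ⊆ (circulantGraph (↑Bf : Set F)).edgeFinset)
    (hfix : ∀ a : F, S.image (tr a) = S) :
    (circulantGraph (↑(Bf.filter (fun b => s(0, b) ∈ S)) : Set F)).edgeFinset = S := by
  have hmemS : ∀ (a : F) (e : Sym2 F), e ∈ S → tr a e ∈ S := by
    intro a e he
    rw [← hfix a]; exact Finset.mem_image_of_mem _ he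
  apply Finset.Subset.antisymm
  · intro e he
    induction e with
    | _ u v =>
      rw [SimpleGraph.mem_edgeFinset, SimpleGraph.mem_edgeSet, circulantGraph_adj] at he
      obtain ⟨hne, h | h⟩ := he
      · have h' := Finset.mem_filter.mp (Finset.mem_coe.mp h)
        have hin := hmemS v _ h'.2
        rw [tr_mk, zero_add] at hin
        have huv : u - v + v = u := by ring
        rw [huv] at hin
        rwa [Sym2.eq_swap] at hin
      · have h' := Finset.mem_filter.mp (Finset.mem_coe.mp h)
        have hin := hmemS u _ h'.2
        rw [tr_mk, zero_add] at hin
        have huv : v - u + u = v := by ring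
        rw [huv] at hin
        exact hin
  · intro e he
    have heE := hsub he
    induction e with
    | _ u v =>
      rw [SimpleGraph.mem_edgeFinset, SimpleGraph.mem_edgeSet, circulantGraph_adj] at heE
      obtain ⟨hne, h | h⟩ := heE
      · -- u - v ∈ Bf
        have hs0 : s(0, u - v) ∈ S := by
          have := hmemS (-v) _ he
          rw [tr_mk] at this
          have h1 : u + -v = u - v := by ring
          have h2 : v + -v = 0 := by ring
          rw [h1, h2] at this
          rwa [Sym2.eq_swap] at this
        have hbf : u - v ∈ Bf.filter (fun b => s(0, b) ∈ S) :=
          Finset.mem_filter.mpr ⟨Finset.mem_coe.mp h, hs0⟩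
        rw [SimpleGraph.mem_edgeFinset, SimpleGraph.mem_edgeSet, circulantGraph_adj]
        exact ⟨hne, Or.inl (Finset.mem_coe.mpr hbf)⟩
      · -- v - u ∈ Bf
        have hs0 : s(0, v - u) ∈ S := by
          have := hmemS (-u) _ he
          rw [tr_mk] at this
          have h1 : v + -u = v - u := by ring
          have h2 : u + -u = 0 := by ring
          rw [h1, h2] at this
          exact this
        have hbf : v - u ∈ Bf.filter (fun b => s(0, b) ∈ S) :=
          Finset.mem_filter.mpr ⟨Finset.mem_coe.mp h, hs0⟩
        rw [SimpleGraph.mem_edgeFinset, SimpleGraph.mem_edgeSet, circulantGraph_adj]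
        exact ⟨hne, Or.inr (Finset.mem_coe.mpr hbf)⟩

private lemma orbit_lemma (p m : ℕ) (hp : p.Prime) (hF : Fintype.card F = p ^ m)
    (P : Set F) (hP : IsPlusSet P)
    (Φ : SimpleGraph F → Prop)
    (hΦiso : ∀ G₁ G₂ : SimpleGraph F, Nonempty (G₁ ≃g G₂) → (Φ G₁ ↔ Φ G₂))
    (Bf : Finset F) (hB : ↑Bf ⊆ P) :
    ((altEnum Φ (circulantGraph (↑Bf : Set F)) : ℤ) : ZMod p) =
      ∑ B' ∈ Bf.powerset, (if Φ (circulantGraph (↑B' : Set F))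
        then (-1 : ZMod p) ^ (circulantGraph (↑B' : Set F)).edgeFinset.card else 0) := by
  classical
  have hcast : ((altEnum Φ (circulantGraph (↑Bf : Set F)) : ℤ) : ZMod p) =
      ∑ S ∈ (circulantGraph (↑Bf : Set F)).edgeFinset.powerset,
        (if Φ (SimpleGraph.fromEdgeSet (S : Set (Sym2 F))) then (-1 : ZMod p) ^ S.card else 0) := by
    rw [altEnum, Int.cast_sum]
    refine Finset.sum_congr (by congr!) (fun S _ => ?_)
    by_cases h : Φ (SimpleGraph.fromEdgeSet (S : Set (Sym2 F)))
    · rw [if_pos h, if_pos h]; push_cast; ring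
    · rw [if_neg h, if_neg h]; exact Int.cast_zero
  rw [hcast]
  rw [← Finset.sum_filter_add_sum_filter_not ((circulantGraph (↑Bf : Set F)).edgeFinset.powerset)
    (fun S => ∀ a : F, S.image (tr a) = S)]
  rw [moved_sum_zero p m hp hF Φ hΦiso ((circulantGraph (↑Bf : Set F)).edgeFinset) (fun a => circ_edge_tr Bf a), add_zero]
  -- bijection between fixed sets and subsets of Bf
  apply Finset.sum_nbij' (i := fun S => Bf.filter (fun b => s(0, b) ∈ S))
    (j := fun B' => (circulantGraph (↑B' : Set F)).edgeFinset)
  · -- maps to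
    intro S hS
    rw [Finset.mem_powerset]
    exact Finset.filter_subset _ _
  · intro B' hB'
    rw [Finset.mem_powerset] at hB'
    rw [Finset.mem_filter, Finset.mem_powerset]
    constructor
    · intro e he
      rw [SimpleGraph.mem_edgeFinset] at he ⊢
      exact SimpleGraph.edgeSet_mono (circ_mono (Finset.coe_subset.mpr hB')) he
    · exact fun a => circ_edge_tr B' a
  · -- left inverse : j (i S) = S for S fixed
    intro S hS
    rw [Finset.mem_filter, Finset.mem_powerset] at hS
    exact fixed_eq hP Bf hB S hS.1 hS.2
  · -- right inverse : i (j B') = B'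
    intro B' hB'
    rw [Finset.mem_powerset] at hB'
    ext b
    rw [Finset.mem_filter]
    constructor
    · rintro ⟨hbBf, hmem⟩
      exact (edge_zero_mem hP (Finset.coe_subset.mpr hB' |>.trans hB) (hB (Finset.mem_coe.mpr hbBf))).mp hmem
    · intro hbB'
      have hbBf : b ∈ Bf := hB' hbB'
      exact ⟨hbBf, (edge_zero_mem hP (Finset.coe_subset.mpr hB' |>.trans hB)
        (hB (Finset.mem_coe.mpr hbBf))).mpr hbB'⟩
  · -- summand equality
    intro S hS
    rw [Finset.mem_filter, Finset.mem_powerset] at hS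
    have hfe := fixed_eq hP Bf hB S hS.1 hS.2
    have hg : SimpleGraph.fromEdgeSet (S : Set (Sym2 F))
        = circulantGraph (↑(Bf.filter (fun b => s(0, b) ∈ S)) : Set F) := by
      conv_lhs => rw [← hfe]
      rw [SimpleGraph.coe_edgeFinset, SimpleGraph.fromEdgeSet_edgeSet]
    rw [hg]
    have hcard : S.card
        = ((circulantGraph (↑(Bf.filter (fun b => s(0, b) ∈ S)) : Set F)).edgeFinset).card := by
      rw [hfe]
    rw [hcard]

private lemma edge_card_eq {P : Set F} (hP : IsPlusSet P) (h2 : (2 : F) ≠ 0)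
    (B' : Finset F) (hB' : ↑B' ⊆ P) :
    (circulantGraph (↑B' : Set F)).edgeFinset.card = B'.card * Fintype.card F := by
  have key : (circulantGraph (↑B' : Set F)).edgeFinset
      = B'.biUnion (fun b => Finset.univ.image (fun u : F => s(u, u + b))) := by
    ext e
    induction e with
    | _ u v =>
      rw [SimpleGraph.mem_edgeFinset, SimpleGraph.mem_edgeSet, circulantGraph_adj,
        Finset.mem_biUnion]
      constructor
      · rintro ⟨hne, h | h⟩
        · refine ⟨u - v, Finset.mem_coe.mp h, Finset.mem_image.mpr ⟨v, Finset.mem_univ _, ?_⟩⟩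
          rw [show v + (u - v) = u by ring]
          exact Sym2.eq_swap
        · refine ⟨v - u, Finset.mem_coe.mp h, Finset.mem_image.mpr ⟨u, Finset.mem_univ _, ?_⟩⟩
          rw [show u + (v - u) = v by ring]
      · rintro ⟨b, hb, hmem⟩
        obtain ⟨u', -, heq⟩ := Finset.mem_image.mp hmem
        have hbP : b ∈ P := hB' (Finset.mem_coe.mpr hb)
        have hb0 : b ≠ 0 := fun h => hP.1 (h ▸ hbP)
        rcases Sym2.eq_iff.mp heq with ⟨rfl, rfl⟩ | ⟨rfl, rfl⟩
        · refine ⟨fun h => hb0 (left_eq_add.mp h), Or.inr ?_⟩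
          rw [show u' + b - u' = b by ring]
          exact Finset.mem_coe.mpr hb
        · refine ⟨fun h => hb0 (add_eq_left.mp h), Or.inl ?_⟩
          rw [show u' + b - u' = b by ring]
          exact Finset.mem_coe.mpr hb
  rw [key, Finset.card_biUnion]
  · have hinj : ∀ b ∈ B', Function.Injective (fun u : F => s(u, u + b)) := by
      intro b hb
      have hbP : b ∈ P := hB' (Finset.mem_coe.mpr hb)
      have hb0 : b ≠ 0 := fun h => hP.1 (h ▸ hbP)
      intro u w huw
      rcases Sym2.eq_iff.mp huw with ⟨h1, -⟩ | ⟨h1, h2'⟩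
      · exact h1
      · exfalso
        rw [← h2'] at h1
        rw [add_assoc] at h1
        have hbb : b + b = 0 := left_eq_add.mp h1
        have : (2 : F) * b = 0 := by rw [two_mul]; exact hbb
        rcases mul_eq_zero.mp this with h | h
        · exact h2 h
        · exact hb0 h
    have : ∀ b ∈ B', (Finset.univ.image (fun u : F => s(u, u + b))).card = Fintype.card F := by
      intro b hb
      rw [Finset.card_image_of_injective _ (hinj b hb), Finset.card_univ]
    rw [Finset.sum_congr rfl this, Finset.sum_const, smul_eq_mul]
  · intro b hb b' hb' hbb'
    rw [Function.onFun, Finset.disjoint_left]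
    intro e he he'
    obtain ⟨u, -, heq⟩ := Finset.mem_image.mp he
    obtain ⟨w, -, heq'⟩ := Finset.mem_image.mp he'
    rw [← heq'] at heq
    have hbP : b ∈ P := hB' (Finset.mem_coe.mpr hb)
    have hb'P : b' ∈ P := hB' (Finset.mem_coe.mpr hb')
    have hb0 : b ≠ 0 := fun h => hP.1 (h ▸ hbP)
    rcases Sym2.eq_iff.mp heq with ⟨h1, h2'⟩ | ⟨h1, h2'⟩
    · apply hbb'
      rw [h1] at h2'
      exact add_left_cancel h2'
    · -- u = w + b', u + b = w  ⇒  b = -b'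
      have hneg : -b = b' := by
        rw [← h2'] at h1
        rw [add_assoc] at h1
        have := left_eq_add.mp h1
        linear_combination -this
      have hnbP : -b ∈ P := hneg ▸ hb'P
      have := (hP.2 b hb0).2 hbP hnbP
      apply hbb'
      rw [← hneg, ← this]


private lemma sign_lemma (p m : ℕ) (hp : p.Prime) (hF : Fintype.card F = p ^ m)
    (hchar : CharP F p) {P : Set F} (hP : IsPlusSet P)
    (B' : Finset F) (hB' : ↑B' ⊆ P) :
    ((-1 : ZMod p) ^ (circulantGraph (↑B' : Set F)).edgeFinset.card)
      = (-1 : ZMod p) ^ B'.card := by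
  rcases eq_or_ne p 2 with rfl | hp2
  · have h1 : (-1 : ZMod 2) = 1 := by decide
    rw [h1, one_pow, one_pow]
  · have h2 : (2 : F) ≠ 0 := by
      intro h
      have h2' : ((2 : ℕ) : F) = 0 := by exact_mod_cast h
      have := (CharP.cast_eq_zero_iff F p 2).mp h2'
      exact hp2 ((Nat.prime_dvd_prime_iff_eq hp Nat.prime_two).mp this)
    rw [edge_card_eq hP h2 B' hB']
    have hodd : Odd (Fintype.card F) := by
      rw [hF]; exact (hp.odd_of_ne_two hp2).pow
    rw [mul_comm, pow_mul, hodd.neg_one_pow]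

end Aux

theorem stmt_12 {F : Type*} [Field F] [Fintype F] [DecidableEq F]
    (p m : ℕ) (hp : p.Prime) (hm : 0 < m) (hF : Fintype.card F = p ^ m)
    (P : Set F) (hP : IsPlusSet P)
    (Φ : SimpleGraph F → Prop)
    (hΦiso : ∀ G₁ G₂ : SimpleGraph F, Nonempty (G₁ ≃g G₂) → (Φ G₁ ↔ Φ G₂))
    (hΦmono : ∀ G₁ G₂ : SimpleGraph F, G₂ ≤ G₁ → Φ G₁ → Φ G₂)
    (hΦnontriv : (∃ G₁ : SimpleGraph F, Φ G₁) ∧ (∃ G₂ : SimpleGraph F, ¬ Φ G₂))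
    (c d : ℕ) (hc : 0 < c) (hd : 0 < d) (hcd : c * d ≤ P.ncard)
    (A : Set F) (hA : A ⊆ P) (hAcard : P.ncard - d ≤ A.ncard)
    (hΦA : Φ (SimpleGraph.circulantGraph A)) :
    ∃ B ⊆ P, c ≤ B.ncard ∧
      ¬ (altEnum Φ (SimpleGraph.circulantGraph B) ≡ 0 [ZMOD p]) := by
  haveI hfact : Fact p.Prime := ⟨hp⟩
  have hchar : CharP F p := char_of_card p m hp hm hF
  obtain ⟨⟨G₁, hG₁⟩, ⟨G₂, hG₂⟩⟩ := hΦnontriv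
  have hPtop : ∀ G : SimpleGraph F, G ≤ SimpleGraph.circulantGraph P := by
    intro G u v huv
    rw [SimpleGraph.circulantGraph_adj]
    have hne := G.ne_of_adj huv
    refine ⟨hne, ?_⟩
    have hsub : u - v ≠ 0 := sub_ne_zero_of_ne hne
    rcases (hP.2 (u - v) hsub).1 with h | h
    · exact Or.inl h
    · right; rwa [neg_sub] at h
  have hsmall : ∀ Bq : Finset F, ↑Bq ⊆ P → Bq.card < c →
      Φ (SimpleGraph.circulantGraph (↑Bq : Set F)) := by
    intro Bq hBq hcard
    exact small_phi p m hp hm hF P hP Φ hΦiso hΦmono c d hd hcd A hA hAcard hΦA ↑Bq hBq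
      (by rwa [Set.ncard_coe_finset])
  have hexists : ∃ n : ℕ, ∃ Bf : Finset F, Bf.card = n ∧ ↑Bf ⊆ P ∧
      ¬ Φ (SimpleGraph.circulantGraph (↑Bf : Set F)) := by
    refine ⟨P.toFinset.card, P.toFinset, rfl, ?_, ?_⟩
    · rw [Set.coe_toFinset]
    · rw [Set.coe_toFinset]
      exact fun h => hG₂ (hΦmono _ _ (hPtop G₂) h)
  obtain ⟨B₀, hB₀card, hB₀P, hB₀Φ⟩ := Nat.find_spec hexists
  have hmin : ∀ B' : Finset F, ↑B' ⊆ P → B'.card < B₀.card →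
      Φ (SimpleGraph.circulantGraph (↑B' : Set F)) := by
    intro B' hB'P hlt
    by_contra hno
    have hle : Nat.find hexists ≤ B'.card := Nat.find_le ⟨B', rfl, hB'P, hno⟩
    omega
  have hc_le : c ≤ B₀.card := by
    by_contra h
    exact hB₀Φ (hsmall B₀ hB₀P (by omega))
  have hne_empty : B₀ ≠ ∅ := by
    intro h
    apply hB₀Φ
    rw [h]
    exact hsmall ∅ (by simp) (by simpa using hc)
  have hval : ((altEnum Φ (SimpleGraph.circulantGraph (↑B₀ : Set F)) : ℤ) : ZMod p)
      = -(-1 : ZMod p) ^ B₀.card := by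
    rw [orbit_lemma p m hp hF P hP Φ hΦiso B₀ hB₀P]
    have hstep : ∀ B' ∈ B₀.powerset,
        (if Φ (SimpleGraph.circulantGraph (↑B' : Set F))
          then (-1 : ZMod p) ^ (SimpleGraph.circulantGraph (↑B' : Set F)).edgeFinset.card else 0)
        = (-1 : ZMod p) ^ B'.card - (if B' = B₀ then (-1 : ZMod p) ^ B₀.card else 0) := by
      intro B' hB'
      rw [Finset.mem_powerset] at hB'
      have hB'P : ↑B' ⊆ P := (Finset.coe_subset.mpr hB').trans hB₀P
      rw [sign_lemma p m hp hF hchar hP B' hB'P]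
      by_cases hEq : B' = B₀
      · subst hEq
        rw [if_pos rfl, if_neg hB₀Φ]
        ring
      · have hΦB' : Φ (SimpleGraph.circulantGraph (↑B' : Set F)) :=
          hmin B' hB'P (Finset.card_lt_card (lt_of_le_of_ne hB' hEq))
        rw [if_pos hΦB', if_neg hEq, sub_zero]
    rw [Finset.sum_congr rfl hstep, Finset.sum_sub_distrib]
    have hzero : ∑ B' ∈ B₀.powerset, (-1 : ZMod p) ^ B'.card = 0 := by
      have hint : (∑ B' ∈ B₀.powerset, (-1 : ℤ) ^ B'.card) = 0 := by
        rw [Finset.sum_powerset_neg_one_pow_card]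
        exact if_neg hne_empty
      have hcast : ((∑ B' ∈ B₀.powerset, (-1 : ℤ) ^ B'.card : ℤ) : ZMod p) = 0 := by
        rw [hint, Int.cast_zero]
      rw [Int.cast_sum] at hcast
      push_cast at hcast
      exact hcast
    rw [hzero, Finset.sum_ite_eq' B₀.powerset B₀ (fun _ => (-1 : ZMod p) ^ B₀.card),
      if_pos (Finset.mem_powerset_self B₀), zero_sub]
  refine ⟨↑B₀, hB₀P, ?_, ?_⟩
  · rw [Set.ncard_coe_finset]; exact hc_le
  · intro hmod
    have hz : ((altEnum Φ (SimpleGraph.circulantGraph (↑B₀ : Set F)) : ℤ) : ZMod p) = 0 := by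
      have := (ZMod.intCast_eq_intCast_iff _ _ _).mpr hmod
      simpa using this
    rw [hval] at hz
    have hne : (-1 : ZMod p) ^ B₀.card ≠ 0 :=
      pow_ne_zero _ (by simpa using (neg_ne_zero.mpr (one_ne_zero (α := ZMod p))))
    exact hne (neg_eq_zero.mp hz)
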